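/- Let a, b, c, d, e be nonzero integers. Define the Laurent polynomials f(x) = x + a + b/x and g(y) = y^2 + c*y + d + e/y. Then either the equation z^2 = f(x)^2 + g(y)^2 has infinitely many nontrivial solutions (x, y, z) in the rational function field ℚ(T) with x ≠ 0, y ≠ 0 and f(x)·g(y) ≠ 0, or the equation z^2 = f(x)^2 - g(y)^2 has infinitely many nontrivial solutions (x, y, z) in ℚ(T) with x ≠ 0, y ≠ 0 and f(x)^2 ≠ g(y)^2. -/

import Mathlib

open Polynomial

/-- Key transcendence lemma: nonzero polynomials don't vanish at `X + n` in `RatFunc ℚ`. -/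
lemma aux_key {inst : Algebra ℚ (RatFunc ℚ)} (n : ℕ) (q : ℚ[X]) (hq : q ≠ 0) :
    (@Polynomial.aeval ℚ (RatFunc ℚ) _ _ inst (RatFunc.X + (n : RatFunc ℚ)) q) ≠ 0 := by
  rw [Subsingleton.elim inst (RatFunc.instAlgebraOfPolynomial ℚ ℚ)]
  have h1 : (RatFunc.X + (n : RatFunc ℚ)) = algebraMap ℚ[X] (RatFunc ℚ) (X + C (n : ℚ)) := by
    rw [map_add, RatFunc.algebraMap_X]
    norm_num
  rw [h1, Polynomial.aeval_algebraMap_apply]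
  apply RatFunc.algebraMap_ne_zero
  rw [← Polynomial.comp_eq_aeval]
  exact Polynomial.comp_X_add_C_ne_zero_iff.mpr hq

/-- auxiliary polynomial of degree 6 -/
noncomputable def pol6 (b c d e : ℤ) : ℚ[X] :=
  (X ^ 3 + C (c : ℚ) * X ^ 2 + C (d : ℚ) * X + C (e : ℚ)) ^ 2 - C ((4 * b : ℤ) : ℚ) * X ^ 2

lemma pol6_natDegree (b c d e : ℤ) : (pol6 b c d e).natDegree = 6 := by
  unfold pol6
  compute_degree!

lemma pol6_ne_zero (b c d e : ℤ) : pol6 b c d e ≠ 0 := by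
  have h := pol6_natDegree b c d e
  intro h0
  rw [h0] at h
  simp at h

/-- auxiliary polynomial of degree 12 -/
noncomputable def pol12 (a b c d e : ℤ) : ℚ[X] :=
  (pol6 b c d e) ^ 2 - C ((4 * a ^ 2 : ℤ) : ℚ) * X ^ 2 * (pol6 b c d e)
    - C ((16 * a ^ 2 * b : ℤ) : ℚ) * X ^ 4

lemma pol12_natDegree (a b c d e : ℤ) : (pol12 a b c d e).natDegree = 12 := by
  unfold pol12 pol6
  compute_degree!

lemma pol12_ne_zero (a b c d e : ℤ) : pol12 a b c d e ≠ 0 := by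
  have h := pol12_natDegree a b c d e
  intro h0
  rw [h0] at h
  simp at h

/-- The main construction, with all moving parts opaque. -/
lemma main_aux (a b c d e : ℤ) (ha : a ≠ 0) (y g x z : RatFunc ℚ)
    (htr : ∀ q : ℚ[X], q ≠ 0 → Polynomial.aeval y q ≠ 0)
    (hg : g = y ^ 2 + c * y + d + e / y)
    (hx : x = (g ^ 2 - 4 * b) / (4 * a))
    (hz : z = x - a - b / x) :
    x ≠ 0 ∧ y ≠ 0 ∧ (x + a + b / x) ^ 2 ≠ g ^ 2 ∧
      z ^ 2 = (x + a + b / x) ^ 2 - g ^ 2 := by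
  have hy0 : y ≠ 0 := by
    have h := htr X Polynomial.X_ne_zero
    simpa using h
  have ha4 : (4 * (a : RatFunc ℚ)) ≠ 0 := by
    have hne : (C ((4 * a : ℤ) : ℚ)) ≠ 0 := by
      rw [Ne, Polynomial.C_eq_zero]
      exact_mod_cast (by omega : (4 * a : ℤ) ≠ 0)
    have h := htr _ hne
    rw [Polynomial.aeval_C, map_intCast] at h
    push_cast at h
    convert h using 1
  have hyG : g * y = y ^ 3 + c * y ^ 2 + d * y + e := by
    rw [hg]
    field_simp
  have hP6y : Polynomial.aeval y (pol6 b c d e) = (g ^ 2 - 4 * b) * y ^ 2 := by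
    have h1 : Polynomial.aeval y (pol6 b c d e)
        = (y ^ 3 + c * y ^ 2 + d * y + e) ^ 2 - 4 * b * y ^ 2 := by
      simp only [pol6, map_sub, map_add, map_mul, map_pow, aeval_X, aeval_C, map_intCast]
      push_cast
      ring
    rw [h1, ← hyG]
    ring
  have hGb : g ^ 2 - 4 * (b : RatFunc ℚ) ≠ 0 := by
    intro h
    exact htr _ (pol6_ne_zero b c d e) (by rw [hP6y, h, zero_mul])
  have hx0 : x ≠ 0 := by
    rw [hx]
    exact div_ne_zero hGb ha4
  have hx4a : x * (4 * a) = g ^ 2 - 4 * b := by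
    rw [hx]
    exact div_mul_cancel₀ _ ha4
  have hA : Polynomial.aeval y (pol6 b c d e) = x * (4 * a) * y ^ 2 := by
    rw [hP6y, hx4a]
  have hQ12y : Polynomial.aeval y (pol12 a b c d e)
      = (x ^ 2 - a * x - b) * (16 * a ^ 2 * y ^ 4) := by
    have h1 : Polynomial.aeval y (pol12 a b c d e)
        = (Polynomial.aeval y (pol6 b c d e)) ^ 2
          - 4 * a ^ 2 * y ^ 2 * (Polynomial.aeval y (pol6 b c d e))
          - 16 * a ^ 2 * b * y ^ 4 := by
      simp only [pol12, map_sub, map_mul, map_pow, aeval_X, aeval_C, map_intCast]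
      push_cast
      ring
    rw [h1, hA]
    ring
  have hxx : x ^ 2 - a * x - b ≠ 0 := by
    intro h
    exact htr _ (pol12_ne_zero a b c d e) (by rw [hQ12y, h, zero_mul])
  have hz0 : z ≠ 0 := by
    intro h
    apply hxx
    have h2 : z * x = x ^ 2 - a * x - b := by
      rw [hz]
      field_simp
    rw [← h2, h, zero_mul]
  have expand : (x - a - b / x) ^ 2
      = (x + a + b / x) ^ 2 - (4 * a * x + 4 * b) := by
    field_simp
    ring
  have hG2 : 4 * (a : RatFunc ℚ) * x + 4 * b = g ^ 2 := by
    linear_combination hx4a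
  have heq : z ^ 2 = (x + a + b / x) ^ 2 - g ^ 2 := by
    rw [hz, expand, hG2]
  have hne : (x + a + b / x) ^ 2 ≠ g ^ 2 := by
    intro h
    apply hz0
    have h2 : z ^ 2 = 0 := by rw [heq, h, sub_self]
    exact pow_eq_zero_iff (n := 2) (by norm_num) |>.mp h2
  exact ⟨hx0, hy0, hne, heq⟩

theorem stmt0 (a b c d e : ℤ) (ha : a ≠ 0) (hb : b ≠ 0) (hc : c ≠ 0)
    (hd : d ≠ 0) (he : e ≠ 0) :
    {p : RatFunc ℚ × RatFunc ℚ × RatFunc ℚ |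
      p.1 ≠ 0 ∧ p.2.1 ≠ 0 ∧
      (p.1 + a + b / p.1) * (p.2.1 ^ 2 + c * p.2.1 + d + e / p.2.1) ≠ 0 ∧
      p.2.2 ^ 2 = (p.1 + a + b / p.1) ^ 2
        + (p.2.1 ^ 2 + c * p.2.1 + d + e / p.2.1) ^ 2}.Infinite ∨
    {p : RatFunc ℚ × RatFunc ℚ × RatFunc ℚ |
      p.1 ≠ 0 ∧ p.2.1 ≠ 0 ∧
      (p.1 + a + b / p.1) ^ 2 ≠ (p.2.1 ^ 2 + c * p.2.1 + d + e / p.2.1) ^ 2 ∧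
      p.2.2 ^ 2 = (p.1 + a + b / p.1) ^ 2
        - (p.2.1 ^ 2 + c * p.2.1 + d + e / p.2.1) ^ 2}.Infinite := by
  right
  haveI : CharZero (RatFunc ℚ) :=
    charZero_of_injective_algebraMap (RatFunc.algebraMap_injective ℚ)
  apply Set.infinite_of_injective_forall_mem
    (f := fun n : ℕ =>
      let y : RatFunc ℚ := RatFunc.X + (n : RatFunc ℚ)
      let g : RatFunc ℚ := y ^ 2 + c * y + d + e / y
      let x : RatFunc ℚ := (g ^ 2 - 4 * b) / (4 * a)
      (x, y, x - a - b / x))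
  · -- injectivity
    intro m k h
    have h2 : RatFunc.X + (m : RatFunc ℚ) = RatFunc.X + (k : RatFunc ℚ) :=
      congrArg (fun p => p.2.1) h
    have h3 : ((m : ℕ) : RatFunc ℚ) = ((k : ℕ) : RatFunc ℚ) := add_left_cancel h2
    exact_mod_cast h3
  · -- membership
    intro n
    obtain ⟨h1, h2, h3, h4⟩ :=
      main_aux a b c d e ha (RatFunc.X + (n : RatFunc ℚ)) _ _ _
        (fun q hq => aux_key n q hq) rfl rfl rfl
    exact ⟨h1, h2, h3, h4⟩
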